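/- If (e_m) is an approximate unit for I_k, then e_m a → a for every a ∈ A_i with 1 ≤ i ≤ n-1-k, using the estimate ‖e_m a − a‖² = ‖e_m a a* e_m − e_m a a* − a a* e_m + a a*‖ and the fact that a a* ∈ I_k. -/

import Mathlib

set_option maxHeartbeats 1000000 in
theorem stmt_17 {A : Type*} [NormedRing A] [StarRing A] [CStarRing A]
    [NormedAlgebra ℂ A] [StarModule ℂ A] [CompleteSpace A]
    (n : ℕ) (hn : 2 ≤ n)
    (α : A ≃ₐ[ℂ] A) (hα : α ^ n = 1)
    (hstar : ∀ x : A, α (star x) = star (α x))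
    (ξ : ℂ) (hξ : IsPrimitiveRoot ξ n)
    (Ak : ℕ → Set A) (hAk : ∀ k, Ak k = {x : A | α x = ξ ^ k • x})
    (k : ℕ) (hk : k ≤ n - 2)
    (Ik : Set A)
    (hIk : Ik = closure ↑(Submodule.span ℂ
      {z : A | ∃ i ∈ Finset.Icc 1 (n - 1 - k), ∃ x ∈ Ak i,
        ∃ y ∈ Ak (n - i), z = x * y}))
    {ι : Type*} (F : Filter ι) [F.NeBot] (e : ι → A)
    (he : ∀ γ, e γ ∈ Ik)
    (happrox : ∀ x ∈ Ik,
      Filter.Tendsto (fun γ => e γ * x) F (nhds x) ∧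
      Filter.Tendsto (fun γ => x * e γ) F (nhds x))
    (i : ℕ) (hi1 : 1 ≤ i) (hi2 : i ≤ n - 1 - k)
    (a : A) (ha : a ∈ Ak i) :
    Filter.Tendsto (fun γ => e γ * a) F (nhds a) := by
  letI : CStarAlgebra A := { }
  letI : PartialOrder A := CStarAlgebra.spectralOrder A
  haveI : StarOrderedRing A := CStarAlgebra.spectralOrderedRing A
  classical
  -- basic facts about ξ
  have hnne : n ≠ 0 := by omega
  have hξn : ξ ^ n = 1 := hξ.pow_eq_one
  have hξne : ξ ≠ 0 := by
    intro h
    rw [h, zero_pow hnne] at hξn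
    exact zero_ne_one hξn
  have hpow_cancel : ∀ j : ℕ, j ≤ n → ξ ^ j * ξ ^ (n - j) = 1 := by
    intro j hj
    rw [← pow_add, Nat.add_sub_cancel' hj, hξn]
  -- the generating set
  set G : Set A := {z : A | ∃ i ∈ Finset.Icc 1 (n - 1 - k), ∃ x ∈ Ak i,
      ∃ y ∈ Ak (n - i), z = x * y} with hG
  set S : Submodule ℂ A := Submodule.span ℂ G with hS
  have hIkS : Ik = closure (S : Set A) := hIk
  have hIkclosed : IsClosed Ik := hIkS ▸ isClosed_closure
  -- multiplication on the generating set
  have hGmul : ∀ z ∈ G, ∀ w ∈ G, z * w ∈ G := by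
    rintro z ⟨i₁, hi₁, x, hx, y, hy, rfl⟩ w ⟨i₂, hi₂, x', hx', y', hy', rfl⟩
    have hi₂n : i₂ ≤ n := le_trans (Finset.mem_Icc.mp hi₂).2 (by omega)
    refine ⟨i₁, hi₁, x, hx, y * (x' * y'), ?_, by rw [mul_assoc]⟩
    rw [hAk] at hy hx' hy' ⊢
    show α (y * (x' * y')) = ξ ^ (n - i₁) • (y * (x' * y'))
    rw [map_mul, map_mul, hy, hx', hy']
    simp only [smul_mul_assoc, mul_smul_comm, smul_smul]
    congr 1
    rw [show ξ ^ (n - i₂) * ξ ^ i₂ * ξ ^ (n - i₁) = ξ ^ i₂ * ξ ^ (n - i₂) * ξ ^ (n - i₁) by ring,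
      hpow_cancel i₂ hi₂n, one_mul]
  -- S is closed under multiplication
  have hSmul : ∀ x ∈ S, ∀ y ∈ S, x * y ∈ S := by
    have hle : S * S ≤ S := by
      rw [hS, Submodule.span_mul_span]
      refine Submodule.span_le.mpr ?_
      rintro z ⟨u, hu, v, hv, rfl⟩
      exact Submodule.subset_span (hGmul u hu v hv)
    exact fun x hx y hy => hle (Submodule.mul_mem_mul hx hy)
  -- Ik is closed under the relevant operations
  have hIkzero : (0 : A) ∈ Ik := hIkS ▸ subset_closure S.zero_mem
  have hIkadd : ∀ x ∈ Ik, ∀ y ∈ Ik, x + y ∈ Ik := by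
    rw [hIkS]
    intro x hx y hy
    exact map_mem_closure₂ continuous_add hx hy
      (fun a ha b hb => S.add_mem ha hb)
  have hIksmul : ∀ (r : ℂ), ∀ x ∈ Ik, r • x ∈ Ik := by
    rw [hIkS]
    intro r x hx
    exact map_mem_closure (continuous_const_smul r) hx
      (fun z hz => S.smul_mem r hz)
  have hIkmul : ∀ x ∈ Ik, ∀ y ∈ Ik, x * y ∈ Ik := by
    rw [hIkS]
    intro x hx y hy
    have step1 : ∀ v ∈ (S : Set A), ∀ u ∈ closure (S : Set A),
        u * v ∈ closure (S : Set A) := by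
      intro v hv u hu
      exact map_mem_closure (f := fun z => z * v) (continuous_mul_right v) hu
        (fun z hz => hSmul z hz v hv)
    have : x * y ∈ closure (closure (S : Set A)) :=
      map_mem_closure (f := fun z => x * z) (continuous_mul_left x) hy
        (fun v hv => step1 v hv x hx)
    rwa [closure_closure] at this
  -- b = a * star a belongs to Ik
  have hin : i ≤ n := by omega
  have hstara : star a ∈ Ak (n - i) := by
    rw [hAk] at ha ⊢
    have h1 : α (star a) = star (ξ ^ i • a) := by rw [hstar, ha]
    rw [star_smul, Complex.star_def] at h1
    have h2 : (starRingEnd ℂ) (ξ ^ i) = ξ ^ (n - i) := by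
      have hmc : ξ ^ i * (starRingEnd ℂ) (ξ ^ i) = 1 := by
        rw [Complex.mul_conj]
        norm_cast
        rw [Complex.normSq_eq_norm_sq]
        have : ‖ξ ^ i‖ = 1 := by
          rw [norm_pow]
          have : ‖ξ‖ = 1 := hξ.norm'_eq_one hnne
          rw [this, one_pow]
        rw [this, one_pow]
      have hm2 : ξ ^ i * ξ ^ (n - i) = 1 := hpow_cancel i hin
      exact mul_left_cancel₀ (pow_ne_zero i hξne) (hmc.trans hm2.symm)
    rw [h2] at h1
    exact h1
  set b : A := a * star a with hbdef
  have hbIk : b ∈ Ik := by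
    rw [hIkS]
    exact subset_closure (Submodule.subset_span
      ⟨i, Finset.mem_Icc.mpr ⟨hi1, hi2⟩, a, ha, star a, hstara, rfl⟩)
  have hb0 : (0 : A) ≤ b := mul_star_self_nonneg a
  have hbsa : IsSelfAdjoint b := .of_nonneg hb0
  -- every element of the non-unital CFC of b lies in Ik
  haveI : CompactSpace (quasispectrum ℝ b) :=
    NonUnitalContinuousFunctionalCalculus.compactSpace_quasispectrum (R := ℝ) b
  have h0 : ((0 : quasispectrum ℝ b) : ℝ) = 0 := rfl
  have hmem : ∀ f : ContinuousMapZero (quasispectrum ℝ b) ℝ,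
      cfcₙHom (R := ℝ) hbsa f ∈ Ik := by
    intro f
    induction f using ContinuousMapZero.induction_on_of_compact with
    | zero => rw [map_zero]; exact hIkzero
    | id =>
      have : cfcₙHom (R := ℝ) hbsa (ContinuousMapZero.id (quasispectrum ℝ b)) = b := cfcₙHom_id hbsa
      rw [this]; exact hbIk
    | star_id =>
      rw [star_trivial]
      have : cfcₙHom (R := ℝ) hbsa (ContinuousMapZero.id (quasispectrum ℝ b)) = b := cfcₙHom_id hbsa
      rw [this]; exact hbIk
    | add f g hf hg => rw [map_add]; exact hIkadd _ hf _ hg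
    | mul f g hf hg => rw [map_mul]; exact hIkmul _ hf _ hg
    | smul r f hf =>
      rw [map_smul, ← Complex.coe_smul]
      exact hIksmul _ _ hf
    | frequently f hf =>
      exact hf.mem_of_closed (hIkclosed.preimage (cfcₙHom_continuous hbsa))
  -- the square root of b
  have hsqrt_cont : ContinuousOn Real.sqrt (quasispectrum ℝ b) :=
    Real.continuous_sqrt.continuousOn
  have hsqrt_zero : Real.sqrt 0 = 0 := Real.sqrt_zero
  set c : A := cfcₙ Real.sqrt b with hcdef
  have hc_apply : c = cfcₙHom (R := ℝ) hbsa ⟨⟨_, hsqrt_cont.restrict⟩, hsqrt_zero⟩ :=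
    cfcₙ_apply Real.sqrt b hsqrt_cont hsqrt_zero hbsa
  have hcIk : c ∈ Ik := by rw [hc_apply]; exact hmem _
  have hcsa : IsSelfAdjoint c := by
    rw [hc_apply]; exact cfcₙHom_predicate hbsa _
  have hcc : c * c = b := by
    rw [hcdef, ← cfcₙ_mul Real.sqrt Real.sqrt b hsqrt_cont hsqrt_zero hsqrt_cont hsqrt_zero]
    have hcongr : (quasispectrum ℝ b).EqOn (fun x => Real.sqrt x * Real.sqrt x)
        (id : ℝ → ℝ) := by
      intro x hx
      have hx0 : (0 : ℝ) ≤ x := quasispectrum_nonneg_of_nonneg b hb0 x hx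
      simp [Real.mul_self_sqrt hx0]
    rw [cfcₙ_congr hcongr, cfcₙ_id ℝ b hbsa]
  -- the key norm identity
  have hnorm : ∀ γ, ‖e γ * a - a‖ = ‖e γ * c - c‖ := by
    intro γ
    have hstc : star c = c := hcsa
    have key : (e γ * a - a) * star (e γ * a - a)
        = (e γ * c - c) * star (e γ * c - c) := by
      rw [star_sub, star_mul, star_sub, star_mul, hstc]
      have expand1 : (e γ * a - a) * (star a * star (e γ) - star a)
          = e γ * (a * star a) * star (e γ) - e γ * (a * star a)
            - (a * star a) * star (e γ) + (a * star a) := by noncomm_ring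
      have expand2 : (e γ * c - c) * (c * star (e γ) - c)
          = e γ * (c * c) * star (e γ) - e γ * (c * c)
            - (c * c) * star (e γ) + (c * c) := by noncomm_ring
      rw [expand1, expand2, hcc]
    have h2 : ‖e γ * a - a‖ * ‖e γ * a - a‖
        = ‖e γ * c - c‖ * ‖e γ * c - c‖ := by
      rw [← CStarRing.norm_self_mul_star, ← CStarRing.norm_self_mul_star, key]
    exact mul_self_inj (norm_nonneg _) (norm_nonneg _) |>.mp h2
  -- conclude
  have hec : Filter.Tendsto (fun γ => e γ * c) F (nhds c) := (happrox c hcIk).1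
  rw [tendsto_iff_norm_sub_tendsto_zero]
  have := tendsto_iff_norm_sub_tendsto_zero.mp hec
  simpa only [hnorm] using this
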